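/- If B does not signal to C in a CPTP map E : S(A⊗B) → S(C⊗D) on finite-dimensional systems, then there exist a finite-dimensional system Q and CPTP maps E₁ : S(A) → S(C⊗Q), E₂ : S(Q⊗B) → S(D) such that E = (I_C ⊗ E₂) ∘ (E₁ ⊗ I_B). -/

import Mathlib

open Matrix BigOperators ComplexOrder

/-- The (unnormalised) Choi matrix of a map between matrix spaces. -/
noncomputable def choiOf {A B : Type*} [Fintype A] [DecidableEq A]
    (E : Matrix A A ℂ → Matrix B B ℂ) : Matrix (A × B) (A × B) ℂ :=
  Matrix.of fun p q => E (Matrix.single p.1 q.1 1) p.2 q.2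

/-- A map is CPTP if it is linear, completely positive (positive semidefinite Choi
matrix, by Choi's theorem) and trace preserving. -/
def IsCPTP {A B : Type*} [Fintype A] [Fintype B] [DecidableEq A]
    (E : Matrix A A ℂ → Matrix B B ℂ) : Prop :=
  (∀ (c : ℂ) (ρ σ : Matrix A A ℂ), E (c • ρ + σ) = c • E ρ + E σ) ∧
  (choiOf E).PosSemidef ∧
  (∀ ρ, (E ρ).trace = ρ.trace)

/-- Partial trace over the first tensor factor. -/
noncomputable def trFst {A X : Type*} [Fintype A]
    (ρ : Matrix (A × X) (A × X) ℂ) : Matrix X X ℂ :=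
  Matrix.of fun x x' => ∑ a, ρ (a, x) (a, x')

/-- Partial trace over the second tensor factor. -/
noncomputable def trSnd {X A : Type*} [Fintype A]
    (ρ : Matrix (X × A) (X × A) ℂ) : Matrix X X ℂ :=
  Matrix.of fun x x' => ∑ a, ρ (x, a) (x', a)

/-- The extension `M ⊗ I` of a (linear) map `M` acting on the first tensor factor. -/
noncomputable def lext {A B X : Type*} [Fintype A] [DecidableEq A]
    (M : Matrix A A ℂ → Matrix B B ℂ) (ρ : Matrix (A × X) (A × X) ℂ) :
    Matrix (B × X) (B × X) ℂ :=
  Matrix.of fun p q => ∑ a, ∑ a',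
    M (Matrix.single a a' 1) p.1 q.1 * ρ (a, p.2) (a', q.2)

/-- The extension `I ⊗ M` of a (linear) map `M` acting on the second tensor factor. -/
noncomputable def rext {A B X : Type*} [Fintype A] [DecidableEq A]
    (M : Matrix A A ℂ → Matrix B B ℂ) (ρ : Matrix (X × A) (X × A) ℂ) :
    Matrix (X × B) (X × B) ℂ :=
  Matrix.of fun p q => ∑ a, ∑ a',
    M (Matrix.single a a' 1) p.2 q.2 * ρ (p.1, a) (q.1, a')

/-! ### Auxiliary lemmas -/

/-- Expand a linear map on matrices over the standard basis. -/
lemma lin_expand {X Y : Type*} [Fintype X] [DecidableEq X] [Fintype Y]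
    (E : Matrix X X ℂ → Matrix Y Y ℂ)
    (hlin : ∀ (c : ℂ) (ρ σ : Matrix X X ℂ), E (c • ρ + σ) = c • E ρ + E σ)
    (ρ : Matrix X X ℂ) (p q : Y) :
    E ρ p q = ∑ x : X, ∑ y : X, ρ x y * E (Matrix.single x y 1) p q := by
  have h0 : E 0 = 0 := by
    have h := hlin 1 0 0
    simp only [one_smul, add_zero] at h
    exact (left_eq_add.mp h)
  have hsmul : ∀ (c : ℂ) ρ, E (c • ρ) = c • E ρ := by
    intro c ρ
    have := hlin c ρ 0
    simpa [h0] using this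
  have hadd : ∀ ρ σ, E (ρ + σ) = E ρ + E σ := by
    intro ρ σ
    have := hlin 1 ρ σ
    simpa using this
  let L : Matrix X X ℂ →ₗ[ℂ] Matrix Y Y ℂ :=
    { toFun := E, map_add' := hadd, map_smul' := hsmul }
  have : E ρ = ∑ x : X, ∑ y : X, ρ x y • E (Matrix.single x y 1) := by
    conv_lhs => rw [Matrix.matrix_eq_sum_single ρ]
    show L _ = _
    rw [map_sum]
    refine Finset.sum_congr rfl fun x _ => ?_
    rw [map_sum]
    refine Finset.sum_congr rfl fun y _ => ?_
    rw [show Matrix.single x y (ρ x y) = ρ x y • Matrix.single x y 1 by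
      ext i j; simp [Matrix.single, Matrix.smul_apply, mul_ite]]
    exact L.map_smul _ _
  rw [this]
  simp [Matrix.sum_apply, Matrix.smul_apply, smul_eq_mul]

lemma kraus_on_std {X Y ι : Type*} [Fintype X] [DecidableEq X] [Fintype Y] [Fintype ι]
    (K : ι → Y → X → ℂ) (E : Matrix X X ℂ → Matrix Y Y ℂ)
    (hE : ∀ ρ p q, E ρ p q = ∑ i, ∑ x, ∑ y, K i p x * ρ x y * (starRingEnd ℂ) (K i q y))
    (x y : X) (p q : Y) :
    E (Matrix.single x y 1) p q = ∑ i, K i p x * (starRingEnd ℂ) (K i q y) := by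
  rw [hE]
  refine Finset.sum_congr rfl fun i _ => ?_
  rw [Finset.sum_eq_single x]
  · rw [Finset.sum_eq_single y]
    · simp [Matrix.single]
    · intro b _ hb; simp [Matrix.single, hb.symm]
    · intro h; exact absurd (Finset.mem_univ y) h
  · intro b _ hb
    apply Finset.sum_eq_zero
    intro c _
    simp [Matrix.single, hb.symm]
  · intro h; exact absurd (Finset.mem_univ x) h

/-- A map given in Kraus form has a PSD Choi matrix. -/
lemma choi_psd_of_kraus {X Y ι : Type*} [Fintype X] [DecidableEq X] [Fintype Y] [Fintype ι]
    (K : ι → Y → X → ℂ) (E : Matrix X X ℂ → Matrix Y Y ℂ)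
    (hE : ∀ ρ p q, E ρ p q = ∑ i, ∑ x, ∑ y, K i p x * ρ x y * (starRingEnd ℂ) (K i q y)) :
    (Matrix.of (fun p q => E (Matrix.single p.1 q.1 1) p.2 q.2) :
      Matrix (X × Y) (X × Y) ℂ).PosSemidef := by
  have hentry := kraus_on_std K E hE
  refine Matrix.PosSemidef.of_dotProduct_mulVec_nonneg ?_ ?_
  · ext ⟨x,p⟩ ⟨y,q⟩
    simp only [Matrix.conjTranspose_apply, Matrix.of_apply, hentry]
    rw [star_sum]
    refine Finset.sum_congr rfl fun i _ => ?_
    simp only [star_mul']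
    simp [mul_comm]
  · intro z
    have hmv : (Matrix.of (fun p q => E (Matrix.single p.1 q.1 1) p.2 q.2) :
        Matrix (X × Y) (X × Y) ℂ) *ᵥ z
        = fun r => ∑ w, E (Matrix.single r.1 w.1 1) r.2 w.2 * z w := by
      ext r; simp [Matrix.mulVec, dotProduct]
    rw [hmv]
    simp only [dotProduct, Pi.star_apply]
    have key : ∀ i, (∑ r : X × Y, star (z r) * K i r.2 r.1) *
        (starRingEnd ℂ) (∑ r : X × Y, star (z r) * K i r.2 r.1)
        = ∑ r : X × Y, ∑ w : X × Y,
            star (z r) * (K i r.2 r.1 * (starRingEnd ℂ) (K i w.2 w.1) * z w) := by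
      intro i
      rw [map_sum, Finset.sum_mul]
      refine Finset.sum_congr rfl fun r _ => ?_
      rw [Finset.mul_sum]
      refine Finset.sum_congr rfl fun w _ => ?_
      simp only [_root_.map_mul]
      have h1 : (starRingEnd ℂ) (star (z w)) = z w := by simp
      rw [h1]; ring
    have lhs_eq : ∑ r : X × Y, star (z r) * ∑ w : X × Y,
          E (Matrix.single r.1 w.1 1) r.2 w.2 * z w
        = ∑ i, ∑ r : X × Y, ∑ w : X × Y,
            star (z r) * (K i r.2 r.1 * (starRingEnd ℂ) (K i w.2 w.1) * z w) := by
      simp only [hentry, Finset.sum_mul, Finset.mul_sum]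
      exact (Finset.sum_comm.trans (Finset.sum_congr rfl fun r _ => Finset.sum_comm)).symm
    rw [lhs_eq]
    apply Finset.sum_nonneg
    intro i _
    rw [← key]
    rw [Complex.mul_conj]
    exact_mod_cast Complex.normSq_nonneg _

/-- Existence of a Hermitian generalized inverse of a Hermitian matrix. -/
lemma exists_pinv {n : Type*} [Fintype n] [DecidableEq n] {P : Matrix n n ℂ}
    (hP : P.IsHermitian) :
    ∃ Pi : Matrix n n ℂ, Pi.IsHermitian ∧ P * Pi * P = P ∧ Pi * P * Pi = Pi := by
  set U : Matrix n n ℂ := (hP.eigenvectorUnitary : Matrix n n ℂ) with hU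
  have hUU : (star U) * U = 1 := by simp [hU]
  set d : n → ℂ := RCLike.ofReal ∘ hP.eigenvalues with hd
  set dinv : n → ℂ :=
    fun i => ((if hP.eigenvalues i = 0 then 0 else (hP.eigenvalues i)⁻¹ : ℝ) : ℂ) with hdinv
  have cancel : ∀ X : Matrix n n ℂ, star U * (U * X) = X := fun X => by
    rw [← Matrix.mul_assoc, hUU, Matrix.one_mul]
  have sandwich : ∀ e f : n → ℂ,
      (U * Matrix.diagonal e * star U) * (U * Matrix.diagonal f * star U)
        = U * Matrix.diagonal (e * f) * star U := by
    intro e f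
    simp only [Matrix.mul_assoc]
    rw [cancel (Matrix.diagonal f * star U)]
    rw [← Matrix.mul_assoc (Matrix.diagonal e), Matrix.diagonal_mul_diagonal]
    rfl
  have hspec : P = U * Matrix.diagonal d * star U := hP.spectral_theorem
  have hdd : d * dinv * d = d := by
    funext i
    simp only [Pi.mul_apply, hd, hdinv, Function.comp_apply]
    by_cases h : hP.eigenvalues i = 0
    · simp [h]
    · simp only [if_neg h]
      push_cast
      field_simp
      exact sq _
  have hdd' : dinv * d * dinv = dinv := by
    funext i
    simp only [Pi.mul_apply, hd, hdinv, Function.comp_apply]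
    by_cases h : hP.eigenvalues i = 0
    · simp [h]
    · simp only [if_neg h]
      push_cast
      field_simp
      rfl
  refine ⟨U * Matrix.diagonal dinv * (star U), ?_, ?_, ?_⟩
  · have hDst : star (Matrix.diagonal dinv) = Matrix.diagonal dinv := by
      rw [Matrix.star_eq_conjTranspose, Matrix.diagonal_conjTranspose]
      have hsd : star dinv = dinv := by
        funext i
        simp only [Pi.star_apply, hdinv, Complex.star_def, Complex.conj_ofReal]
      rw [hsd]
    show _ᴴ = _
    rw [← Matrix.star_eq_conjTranspose]
    rw [StarMul.star_mul, StarMul.star_mul, star_star, hDst]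
    rw [Matrix.mul_assoc]
  · rw [hspec, sandwich, sandwich, hdd]
  · rw [hspec, sandwich, sandwich, hdd']

/-- A general "Kraus form" map on matrices. -/
noncomputable def krausMap {X Y ι : Type*} [Fintype X] [Fintype ι]
    (K : ι → Y → X → ℂ) : Matrix X X ℂ → Matrix Y Y ℂ :=
  fun ρ => Matrix.of fun p q => ∑ i, ∑ x, ∑ y, K i p x * ρ x y * (starRingEnd ℂ) (K i q y)

lemma krausMap_apply {X Y ι : Type*} [Fintype X] [Fintype ι] (K : ι → Y → X → ℂ)
    (ρ : Matrix X X ℂ) (p q : Y) :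
    krausMap K ρ p q = ∑ i, ∑ x, ∑ y, K i p x * ρ x y * (starRingEnd ℂ) (K i q y) := rfl

lemma krausMap_linear {X Y ι : Type*} [Fintype X] [Fintype ι] (K : ι → Y → X → ℂ) :
    ∀ (c : ℂ) (ρ σ : Matrix X X ℂ),
      krausMap K (c • ρ + σ) = c • krausMap K ρ + krausMap K σ := by
  intro c ρ σ
  ext p q
  simp only [krausMap, Matrix.of_apply, Matrix.add_apply, Matrix.smul_apply, smul_eq_mul]
  have h : ∀ (i : ι) (x y : X),
      K i p x * (c * ρ x y + σ x y) * (starRingEnd ℂ) (K i q y)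
        = c * (K i p x * ρ x y * (starRingEnd ℂ) (K i q y))
          + K i p x * σ x y * (starRingEnd ℂ) (K i q y) := by
    intros; ring
  simp only [h, Finset.sum_add_distrib, Finset.mul_sum]

lemma sum_swap4 {P I X Y : Type*} [Fintype P] [Fintype I] [Fintype X] [Fintype Y]
    (f : P → I → X → Y → ℂ) :
    ∑ p, ∑ i, ∑ x, ∑ y, f p i x y = ∑ x, ∑ y, ∑ i, ∑ p, f p i x y := by
  calc ∑ p, ∑ i, ∑ x, ∑ y, f p i x y
      = ∑ i, ∑ p, ∑ x, ∑ y, f p i x y := Finset.sum_comm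
    _ = ∑ i, ∑ x, ∑ p, ∑ y, f p i x y :=
        Finset.sum_congr rfl fun i _ => Finset.sum_comm
    _ = ∑ i, ∑ x, ∑ y, ∑ p, f p i x y :=
        Finset.sum_congr rfl fun i _ => Finset.sum_congr rfl fun x _ => Finset.sum_comm
    _ = ∑ x, ∑ i, ∑ y, ∑ p, f p i x y := Finset.sum_comm
    _ = ∑ x, ∑ y, ∑ i, ∑ p, f p i x y :=
        Finset.sum_congr rfl fun x _ => Finset.sum_comm

lemma sum_swap4' {P I X Y : Type*} [Fintype P] [Fintype I] [Fintype X] [Fintype Y]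
    (f : P → I → X → Y → ℂ) :
    ∑ p, ∑ i, ∑ x, ∑ y, f p i x y = ∑ i, ∑ y, ∑ p, ∑ x, f p i x y := by
  calc ∑ p, ∑ i, ∑ x, ∑ y, f p i x y
      = ∑ i, ∑ p, ∑ x, ∑ y, f p i x y := Finset.sum_comm
    _ = ∑ i, ∑ p, ∑ y, ∑ x, f p i x y :=
        Finset.sum_congr rfl fun i _ => Finset.sum_congr rfl fun p _ => Finset.sum_comm
    _ = ∑ i, ∑ y, ∑ p, ∑ x, f p i x y :=
        Finset.sum_congr rfl fun i _ => Finset.sum_comm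

lemma krausMap_tp {X Y ι : Type*} [Fintype X] [DecidableEq X] [Fintype Y] [Fintype ι]
    (K : ι → Y → X → ℂ)
    (h : ∀ x y : X, (∑ i, ∑ p : Y, K i p x * (starRingEnd ℂ) (K i p y))
        = if x = y then 1 else 0) :
    ∀ ρ : Matrix X X ℂ, (krausMap K ρ).trace = ρ.trace := by
  intro ρ
  simp only [Matrix.trace, Matrix.diag, krausMap, Matrix.of_apply]
  rw [sum_swap4 (f := fun p i x y => K i p x * ρ x y * (starRingEnd ℂ) (K i p y))]
  have h2 : ∀ x y : X, ∑ i, ∑ p, K i p x * ρ x y * (starRingEnd ℂ) (K i p y)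
      = ρ x y * (if x = y then 1 else 0) := by
    intro x y
    rw [← h x y, Finset.mul_sum]
    refine Finset.sum_congr rfl fun i _ => ?_
    rw [Finset.mul_sum]
    refine Finset.sum_congr rfl fun p _ => ?_
    ring
  simp only [h2, mul_ite, mul_one, mul_zero]
  refine Finset.sum_congr rfl fun x _ => ?_
  rw [Finset.sum_ite_eq Finset.univ x (fun y => ρ x y)]
  simp

lemma krausMap_cptp {X Y ι : Type*} [Fintype X] [DecidableEq X] [Fintype Y] [Fintype ι]
    (K : ι → Y → X → ℂ)
    (h : ∀ x y : X, (∑ i, ∑ p : Y, K i p x * (starRingEnd ℂ) (K i p y))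
        = if x = y then 1 else 0) :
    IsCPTP (krausMap K) :=
  ⟨krausMap_linear K, choi_psd_of_kraus K _ (fun _ _ _ => rfl), krausMap_tp K h⟩

lemma herm_conj_apply {n : Type*} {M : Matrix n n ℂ} (h : M.IsHermitian) (i j : n) :
    (starRingEnd ℂ) (M i j) = M j i := by
  conv_rhs => rw [← h]
  rfl

lemma sum_double_ite {n : Type*} [Fintype n] [DecidableEq n] (a a' : n) :
    (∑ x : n, if a = x ∧ a' = x then (1:ℂ) else 0) = if a = a' then 1 else 0 := by
  simp only [ite_and]
  rw [Finset.sum_ite_eq (Finset.univ) a (fun x => if a' = x then (1:ℂ) else 0)]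
  simp [eq_comm]

lemma trace_std {n : Type*} [Fintype n] [DecidableEq n] (a a' : n) :
    (Matrix.single a a' (1 : ℂ)).trace = if a = a' then 1 else 0 := by
  simp only [Matrix.trace, Matrix.diag, Matrix.single, Matrix.of_apply]
  exact sum_double_ite a a'


lemma sum_swap3 {I J S : Type*} [Fintype I] [Fintype J] [Fintype S]
    (h : I → J → S → ℂ) :
    ∑ i, ∑ j, ∑ s, h i j s = ∑ s, ∑ i, ∑ j, h i j s := by
  calc ∑ i, ∑ j, ∑ s, h i j s
      = ∑ i, ∑ s, ∑ j, h i j s := Finset.sum_congr rfl fun i _ => Finset.sum_comm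
    _ = ∑ s, ∑ i, ∑ j, h i j s := Finset.sum_comm

lemma sum_factor {ι κ : Type*} [Fintype ι] [Fintype κ] (f g : κ → ι → ℂ) (u v : ι → ℂ) :
    ∑ i, ∑ i', (∑ s, f s i * (starRingEnd ℂ) (g s i')) * (u i * (starRingEnd ℂ) (v i'))
      = ∑ s, (∑ i, f s i * u i) * (starRingEnd ℂ) (∑ i', g s i' * v i') := by
  have hR : ∀ s, (∑ i, f s i * u i) * (starRingEnd ℂ) (∑ i', g s i' * v i')
      = ∑ i, ∑ i', (f s i * (starRingEnd ℂ) (g s i')) * (u i * (starRingEnd ℂ) (v i')) := by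
    intro s
    rw [map_sum, Finset.sum_mul]
    refine Finset.sum_congr rfl fun i _ => ?_
    rw [Finset.mul_sum]
    refine Finset.sum_congr rfl fun i' _ => ?_
    simp only [_root_.map_mul]
    ring
  simp only [hR]
  calc ∑ i, ∑ i', (∑ s, f s i * (starRingEnd ℂ) (g s i')) * (u i * (starRingEnd ℂ) (v i'))
      = ∑ i, ∑ i', ∑ s, (f s i * (starRingEnd ℂ) (g s i')) * (u i * (starRingEnd ℂ) (v i')) := by
        refine Finset.sum_congr rfl fun i _ => Finset.sum_congr rfl fun i' _ => ?_
        rw [Finset.sum_mul]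
    _ = ∑ s, ∑ i, ∑ i', (f s i * (starRingEnd ℂ) (g s i')) * (u i * (starRingEnd ℂ) (v i')) :=
        sum_swap3 _

open scoped MatrixOrder in
lemma psd_sqrt_exists {n : Type*} [Fintype n] [DecidableEq n] {M : Matrix n n ℂ}
    (h : M.PosSemidef) : ∃ R : Matrix n n ℂ, R.IsHermitian ∧ R * R = M :=
  ⟨CFC.sqrt M, (CFC.sqrt_nonneg M).posSemidef.1, CFC.sqrt_mul_sqrt_self M h.nonneg⟩

/-- If `B` does not signal to `C` in a CPTP map
`E : S(A⊗B) → S(C⊗D)` (i.e. `tr_D ∘ E = F ∘ tr_B` for some CPTP `F`), then there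
exist a finite-dimensional system `Q` and CPTP maps `E₁ : S(A) → S(C⊗Q)`,
`E₂ : S(Q⊗B) → S(D)` with `E = (I_C ⊗ E₂) ∘ (E₁ ⊗ I_B)`. -/
theorem oneway_signalling_decomposition
    {A B C D : Type} [Fintype A] [Fintype B] [Fintype C] [Fintype D]
    [DecidableEq A] [DecidableEq B] [DecidableEq C] [DecidableEq D]
    (E : Matrix (A × B) (A × B) ℂ → Matrix (C × D) (C × D) ℂ)
    (hE : IsCPTP E)
    (hns : ∃ F : Matrix A A ℂ → Matrix C C ℂ, IsCPTP F ∧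
        ∀ ρ, trSnd (E ρ) = F (trSnd ρ)) :
    ∃ (q : ℕ)
      (E₁ : Matrix A A ℂ → Matrix (C × Fin q) (C × Fin q) ℂ)
      (E₂ : Matrix (Fin q × B) (Fin q × B) ℂ → Matrix D D ℂ),
      IsCPTP E₁ ∧ IsCPTP E₂ ∧
      ∀ ρ, E ρ =
        rext E₂ ((Matrix.reindex (Equiv.prodAssoc C (Fin q) B) (Equiv.prodAssoc C (Fin q) B))
          (lext E₁ ρ)) := by
  classical
  obtain ⟨F, hF, hFE⟩ := hns
  by_cases hD : Nonempty D
  · -- Main case: `D` is nonempty.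
    haveI := hD
    obtain ⟨d₀⟩ := hD
    -- linearity facts for F
    have hFsmul : ∀ (c : ℂ) (ρ : Matrix A A ℂ), F (c • ρ) = c • F ρ := by
      intro c ρ
      have h0 : F 0 = 0 := by
        have h := hF.1 1 0 0
        simp only [one_smul, add_zero] at h
        exact (left_eq_add.mp h)
      have := hF.1 c ρ 0
      simpa [h0] using this
    have hG : (choiOf F).PosSemidef := hF.2.1
    have hJ : (choiOf E).PosSemidef := hE.2.1
    set G : Matrix ((A × C)) ((A × C)) ℂ := choiOf F with hGdef
    set J : Matrix ((A × B) × (C × D)) ((A × B) × (C × D)) ℂ := choiOf E with hJdef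
    obtain ⟨R, hRh, hRR⟩ := psd_sqrt_exists hJ
    obtain ⟨rG, hrGh, hrGG⟩ := psd_sqrt_exists hG
    -- entrywise non-signalling condition on the Choi matrix
    have hNS : ∀ (a a' : A) (b b' : B) (c c' : C),
        (∑ d, J ((a,b),(c,d)) ((a',b'),(c',d)))
          = (if b = b' then 1 else 0) * G (a,c) (a',c') := by
      intro a a' b b' c c'
      have h2 : trSnd (Matrix.single ((a,b)) ((a',b')) (1:ℂ))
          = (if b = b' then (1:ℂ) else 0) • Matrix.single a a' 1 := by
        ext a₁ a₂
        simp only [trSnd, Matrix.of_apply, Matrix.single, Matrix.smul_apply,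
          Prod.mk.injEq, smul_eq_mul]
        by_cases h₁ : a = a₁ <;> by_cases h₂ : a' = a₂ <;>
          simp [h₁, h₂, sum_double_ite b b']
      have h1 := hFE (Matrix.single ((a,b)) ((a',b')) 1)
      rw [h2, hFsmul] at h1
      calc ∑ d, J ((a,b),(c,d)) ((a',b'),(c',d))
          = trSnd (E (Matrix.single ((a,b)) ((a',b')) 1)) c c' := rfl
        _ = ((if b = b' then (1:ℂ) else 0) • F (Matrix.single a a' 1)) c c' := by
            rw [h1]
        _ = (if b = b' then 1 else 0) * G (a,c) (a',c') := rfl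
    -- the ancilla system and main operators
    set q : ℕ := Fintype.card (A × C) with hqdef
    set e : Fin q ≃ A × C := (Fintype.equivFin (A × C)).symm with hedef
    set K : (C × Fin q) → A → ℂ := fun p a => rG (a, p.1) (e p.2) with hKdef
    set X : Matrix (Fin q × B) ((A × C) × B) ℂ :=
      Matrix.of fun u v => (if u.2 = v.2 then (1:ℂ) else 0) * rG v.1 (e u.1) with hXdef
    set Y : Matrix (D × ((A × B) × (C × D))) ((A × C) × B) ℂ :=
      Matrix.of fun r v => R ((v.1.1, v.2), (v.1.2, r.1)) r.2 with hYdef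
    set P : Matrix ((A × C) × B) ((A × C) × B) ℂ := Xᴴ * X with hPdef
    have hPh : P.IsHermitian := Matrix.isHermitian_conjTranspose_mul_self X
    -- the two Gram matrices agree
    have hYY : Yᴴ * Y = P := by
      rw [hPdef]
      apply Matrix.ext
      rintro ⟨⟨a, c⟩, b⟩ ⟨⟨a', c'⟩, b'⟩
      rw [Matrix.mul_apply, Matrix.mul_apply]
      have hL : ∑ j : D × ((A × B) × (C × D)), Yᴴ (((a,c),b)) j * Y j (((a',c'),b'))
          = (if b' = b then 1 else 0) * G (a',c') (a,c) := by
        conv_lhs => rw [Fintype.sum_prod_type]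
        have h1 : ∀ (d : D), ∑ s : (A × B) × (C × D),
            Yᴴ (((a,c),b)) (d,s) * Y (d,s) (((a',c'),b'))
            = J ((a',b'),(c',d)) ((a,b),(c,d)) := by
          intro d
          rw [← hRR, Matrix.mul_apply]
          refine Finset.sum_congr rfl fun s _ => ?_
          rw [Matrix.conjTranspose_apply]
          show star (R ((a,b),(c,d)) s) * R ((a',b'),(c',d)) s = _
          rw [show (star (R ((a,b),(c,d)) s) : ℂ) = R s ((a,b),(c,d)) from
            herm_conj_apply hRh _ _]
          exact mul_comm _ _
        simp only [h1]
        exact hNS a' a b' b c' c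
      rw [hL]
      have hRt : ∑ u : Fin q × B, Xᴴ (((a,c),b)) u * X u (((a',c'),b'))
          = (if b = b' then 1 else 0) * G (a',c') (a,c) := by
        conv_lhs => rw [Fintype.sum_prod_type]
        have h2 : ∀ i : Fin q, ∑ β : B, Xᴴ (((a,c),b)) (i,β) * X (i,β) (((a',c'),b'))
            = (if b = b' then 1 else 0) * (rG (e i) (a,c) * rG (a',c') (e i)) := by
          intro i
          have h3 : ∀ β : B, Xᴴ (((a,c),b)) (i,β) * X (i,β) (((a',c'),b'))
              = (if b = β ∧ b' = β then 1 else 0) * (rG (e i) (a,c) * rG (a',c') (e i)) := by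
            intro β
            rw [Matrix.conjTranspose_apply]
            show star ((if β = b then (1:ℂ) else 0) * rG (a,c) (e i)) *
              ((if β = b' then (1:ℂ) else 0) * rG (a',c') (e i)) = _
            rw [star_mul']
            rw [show (star (rG (a,c) (e i)) : ℂ) = rG (e i) (a,c) from
              herm_conj_apply hrGh _ _]
            by_cases h4 : β = b <;> by_cases h5 : β = b'
            · simp [h4, h5, h4.symm.trans h5]
            · have k1 : ¬b = b' := fun hh => h5 (h4.trans hh)
              have k1' : ¬b' = b := fun hh => k1 hh.symm
              simp [h4, h5, k1, k1']
            · have k2 : ¬b' = b := fun hh => h4 (h5.trans hh)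
              have k2' : ¬b = b' := fun hh => k2 hh.symm
              simp [h4, h5, k2, k2']
            · have hcond : ¬(b = β ∧ b' = β) := fun hh => h4 hh.1.symm
              simp [h4, h5, hcond]
          simp only [h3]
          rw [← Finset.sum_mul]
          congr 1
          exact sum_double_ite b b'
        simp only [h2]
        rw [← Finset.mul_sum]
        congr 1
        rw [Equiv.sum_comp e (fun s => rG s (a,c) * rG (a',c') s)]
        rw [show ∑ s : A × C, rG s (a,c) * rG (a',c') s
            = ∑ s : A × C, rG (a',c') s * rG s (a,c) from
          Finset.sum_congr rfl fun s _ => mul_comm _ _]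
        rw [← Matrix.mul_apply, hrGG]
      rw [hRt]
      by_cases hb : b = b'
      · simp [hb]
      · simp [hb, show ¬b' = b from fun hh => hb hh.symm]
    obtain ⟨Pi, hPih, hPPiP, hPiPPi⟩ := exists_pinv hPh
    set T : Matrix (D × ((A × B) × (C × D))) (Fin q × B) ℂ := Y * Pi * Xᴴ with hTdef
    set M : Matrix (Fin q × B) (Fin q × B) ℂ := X * Pi * Xᴴ with hMdef
    set N : Matrix (Fin q × B) (Fin q × B) ℂ := 1 - M with hNdef
    have core : ∀ (m : Type) (_ : Fintype m) (W : Matrix m ((A × C) × B) ℂ),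
        Wᴴ * W = P → W * (Pi * P) = W := by
      intro m _ W hW
      have hPiPh : (Pi * P)ᴴ = P * Pi := by
        rw [Matrix.conjTranspose_mul, hPih.eq, hPh.eq]
      have hPPP : P * (Pi * P) = P := by
        rw [← Matrix.mul_assoc, hPPiP]
      have hz : (W - W * (Pi * P))ᴴ * (W - W * (Pi * P)) = 0 := by
        rw [Matrix.conjTranspose_sub, Matrix.sub_mul, Matrix.mul_sub, Matrix.mul_sub,
          Matrix.conjTranspose_mul, hPiPh]
        rw [hW]
        have e1 : Wᴴ * (W * (Pi * P)) = P := by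
          rw [← Matrix.mul_assoc, hW, hPPP]
        rw [e1]
        have e2 : P * Pi * Wᴴ * W = P := by
          rw [Matrix.mul_assoc (P * Pi) Wᴴ W, hW, hPPiP]
        have e3 : P * Pi * Wᴴ * (W * (Pi * P)) = P := by
          rw [Matrix.mul_assoc (P * Pi) Wᴴ (W * (Pi * P)), e1, hPPiP]
        rw [e2, e3]
        simp
      exact (sub_eq_zero.mp (Matrix.conjTranspose_mul_self_eq_zero.mp hz)).symm
    have hTX : T * X = Y := by
      rw [hTdef, Matrix.mul_assoc (Y * Pi) Xᴴ X, ← hPdef, Matrix.mul_assoc Y Pi P]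
      exact core _ inferInstance Y hYY
    have hMX : M * X = X := by
      rw [hMdef, Matrix.mul_assoc (X * Pi) Xᴴ X, ← hPdef, Matrix.mul_assoc X Pi P]
      exact core _ inferInstance X rfl
    have hNX : N * X = 0 := by
      rw [hNdef, Matrix.sub_mul, Matrix.one_mul, hMX, sub_self]
    have hTh : Tᴴ = X * (Pi * Yᴴ) := by
      rw [hTdef, Matrix.conjTranspose_mul, Matrix.conjTranspose_mul,
        Matrix.conjTranspose_conjTranspose, hPih.eq]
    have hTT : Tᴴ * T = M := by
      rw [hTh, hTdef, hMdef]
      simp only [Matrix.mul_assoc]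
      rw [← Matrix.mul_assoc Yᴴ Y (Pi * Xᴴ), hYY]
      rw [← Matrix.mul_assoc Pi P (Pi * Xᴴ), ← Matrix.mul_assoc (Pi * P) Pi Xᴴ, hPiPPi]
    have hMh : M.IsHermitian := by
      show Mᴴ = M
      rw [hMdef, Matrix.conjTranspose_mul, Matrix.conjTranspose_mul,
        Matrix.conjTranspose_conjTranspose, hPih.eq, ← Matrix.mul_assoc]
    have hMM : M * M = M := by
      have key : (X * Pi * Xᴴ) * (X * Pi * Xᴴ) = X * Pi * Xᴴ := by
        simp only [Matrix.mul_assoc]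
        rw [← Matrix.mul_assoc Xᴴ X (Pi * Xᴴ), ← hPdef]
        rw [← Matrix.mul_assoc Pi P (Pi * Xᴴ), ← Matrix.mul_assoc (Pi * P) Pi Xᴴ, hPiPPi]
      rw [hMdef]
      exact key
    have hNh : N.IsHermitian := by
      rw [hNdef]
      exact Matrix.isHermitian_one.sub hMh
    have hNN : N * N = N := by
      rw [hNdef, Matrix.sub_mul, Matrix.one_mul, Matrix.mul_sub, Matrix.mul_one, hMM,
        sub_self, sub_zero]
    have hsum : Tᴴ * T + Nᴴ * N = 1 := by
      rw [hTT, hNh.eq, hNN, hNdef]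
      abel
    -- Kraus operators for E₂
    set Kr2 : (((A × B) × (C × D)) ⊕ (Fin q × B)) → D → (Fin q × B) → ℂ :=
      Sum.elim (fun s dd u => T (dd, s) u) (fun k dd u => if dd = d₀ then N k u else 0)
      with hKr2def
    -- trace-preservation conditions
    have hK1 : ∀ x y : A, (∑ i : Unit, ∑ p : C × Fin q,
        (fun (_ : Unit) (p : C × Fin q) (a : A) => K p a) i p x *
          (starRingEnd ℂ) ((fun (_ : Unit) (p : C × Fin q) (a : A) => K p a) i p y))
          = if x = y then 1 else 0 := by
      intro a a'
      simp only
      rw [Finset.univ_unique, Finset.sum_singleton]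
      rw [Fintype.sum_prod_type]
      have h1 : ∀ c : C, ∑ i : Fin q, K (c, i) a * (starRingEnd ℂ) (K (c, i) a')
          = G (a,c) (a',c) := by
        intro c
        have h2 : ∀ i : Fin q, K (c,i) a * (starRingEnd ℂ) (K (c,i) a')
            = rG (a,c) (e i) * rG (e i) (a',c) := by
          intro i
          rw [hKdef]
          simp only
          rw [herm_conj_apply hrGh]
        simp only [h2]
        rw [Equiv.sum_comp e (fun s => rG (a,c) s * rG s (a',c))]
        rw [← Matrix.mul_apply, hrGG]
      simp only [h1]
      have h3 := hF.2.2 (Matrix.single a a' 1)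
      rw [trace_std] at h3
      rw [← h3]
      rfl
    have hK2 : ∀ u u' : Fin q × B, (∑ i, ∑ dd : D,
        Kr2 i dd u * (starRingEnd ℂ) (Kr2 i dd u')) = if u = u' then 1 else 0 := by
      intro u u'
      rw [Fintype.sum_sum_type]
      have hpart1 : ∑ s : (A × B) × (C × D), ∑ dd : D,
          Kr2 (Sum.inl s) dd u * (starRingEnd ℂ) (Kr2 (Sum.inl s) dd u')
          = (Tᴴ * T) u' u := by
        rw [Matrix.mul_apply]
        conv_rhs => rw [Fintype.sum_prod_type]
        conv_lhs => rw [Finset.sum_comm]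
        refine Finset.sum_congr rfl fun dd _ => Finset.sum_congr rfl fun s _ => ?_
        simp only [hKr2def, Sum.elim_inl]
        rw [Matrix.conjTranspose_apply]
        exact mul_comm _ _
      have hpart2 : ∑ k : Fin q × B, ∑ dd : D,
          Kr2 (Sum.inr k) dd u * (starRingEnd ℂ) (Kr2 (Sum.inr k) dd u')
          = (Nᴴ * N) u' u := by
        have hh : ∀ k : Fin q × B, ∑ dd : D,
            Kr2 (Sum.inr k) dd u * (starRingEnd ℂ) (Kr2 (Sum.inr k) dd u')
            = N k u * (starRingEnd ℂ) (N k u') := by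
          intro k
          rw [Finset.sum_eq_single d₀]
          · simp [hKr2def]
          · intro dd _ hdd; simp [hKr2def, hdd]
          · intro h; exact absurd (Finset.mem_univ d₀) h
        simp only [hh]
        rw [Matrix.mul_apply]
        refine Finset.sum_congr rfl fun k _ => ?_
        rw [Matrix.conjTranspose_apply]
        exact mul_comm _ _
      rw [hpart1, hpart2, ← Matrix.add_apply, hsum, Matrix.one_apply]
      simp [eq_comm]
    -- entrywise consequences of T * X = Y and N * X = 0
    have hWXentry : ∀ (m : Type) (_ : Fintype m) (W : Matrix m ((Fin q) × B) ℂ)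
        (r : m) (a : A) (c : C) (b : B),
        ∑ i : Fin q, W r (i, b) * K (c, i) a = (W * X) r ((a, c), b) := by
      intro m _ W r a c b
      rw [Matrix.mul_apply, Fintype.sum_prod_type]
      refine Finset.sum_congr rfl fun i _ => ?_
      rw [Finset.sum_eq_single b]
      · simp [hXdef, hKdef]
      · intro β _ hβ
        simp [hXdef, hβ]
      · intro h; exact absurd (Finset.mem_univ b) h
    have hTXe : ∀ (dd : D) (s : (A × B) × (C × D)) (a : A) (c : C) (b : B),
        ∑ i : Fin q, T (dd, s) (i, b) * K (c, i) a = R ((a,b),(c,dd)) s := by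
      intro dd s a c b
      rw [hWXentry _ inferInstance T (dd, s) a c b, hTX]
      rfl
    have hNXe : ∀ (k : Fin q × B) (a : A) (c : C) (b : B),
        ∑ i : Fin q, N k (i, b) * K (c, i) a = 0 := by
      intro k a c b
      rw [hWXentry _ inferInstance N k a c b, hNX]
      simp
    refine ⟨q, krausMap (fun (_ : Unit) (p : C × Fin q) (a : A) => K p a), krausMap Kr2,
      krausMap_cptp _ hK1, krausMap_cptp _ hK2, ?_⟩
    intro ρ
    apply Matrix.ext
    rintro ⟨c, dd⟩ ⟨c', dd'⟩
    rw [lin_expand E hE.1 ρ ((c,dd)) ((c',dd'))]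
    -- abbreviation for the Choi pairing of E₂
    set E2c : (Fin q × B) → (Fin q × B) → ℂ := fun u u' =>
      (∑ s : (A × B) × (C × D), T (dd,s) u * (starRingEnd ℂ) (T (dd',s) u'))
        + ((if dd = d₀ then (1:ℂ) else 0) * (if dd' = d₀ then (1:ℂ) else 0)) *
          (∑ k : Fin q × B, N k u * (starRingEnd ℂ) (N k u')) with hE2cdef
    have hE2std : ∀ (u u' : Fin q × B),
        krausMap Kr2 (Matrix.single u u' 1) dd dd' = E2c u u' := by
      intro u u'
      rw [kraus_on_std Kr2 (krausMap Kr2) (fun _ _ _ => rfl) u u' dd dd']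
      rw [Fintype.sum_sum_type, hE2cdef]
      congr 1
      by_cases h1 : dd = d₀ <;> by_cases h2 : dd' = d₀ <;>
        simp [hKr2def, h1, h2, Finset.mul_sum]
    have hE1std : ∀ (a a' : A) (p p' : C × Fin q),
        krausMap (fun (_ : Unit) (p : C × Fin q) (a : A) => K p a)
            (Matrix.single a a' 1) p p'
          = K p a * (starRingEnd ℂ) (K p' a') := by
      intro a a' p p'
      rw [kraus_on_std (fun (_ : Unit) (p : C × Fin q) (a : A) => K p a)
        (krausMap (fun (_ : Unit) (p : C × Fin q) (a : A) => K p a))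
        (fun _ _ _ => rfl) a a' p p']
      simp
    show _ = ∑ u : Fin q × B, ∑ u' : Fin q × B,
        krausMap Kr2 (Matrix.single u u' 1) dd dd' *
          ∑ a : A, ∑ a' : A,
            krausMap (fun (_ : Unit) (p : C × Fin q) (a : A) => K p a)
              (Matrix.single a a' 1) (c, u.1) (c', u'.1) * ρ (a, u.2) (a', u'.2)
    simp only [hE2std, hE1std]
    have hLHS : ∑ x : A × B, ∑ y : A × B,
          ρ x y * E (Matrix.single x y 1) ((c,dd)) ((c',dd'))
        = ∑ a : A, ∑ b : B, ∑ a' : A, ∑ b' : B,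
            ρ (a,b) (a',b') * J ((a,b),(c,dd)) ((a',b'),(c',dd')) := by
      rw [Fintype.sum_prod_type]
      refine Finset.sum_congr rfl fun a _ => Finset.sum_congr rfl fun b _ => ?_
      rw [Fintype.sum_prod_type]
      rfl
    rw [hLHS]
    -- reorganize the right-hand side into the same shape
    have swap1 : ∑ u : Fin q × B, ∑ u' : Fin q × B, E2c u u' *
          ∑ a : A, ∑ a' : A,
            (K (c, u.1) a * (starRingEnd ℂ) (K (c', u'.1) a')) * ρ (a, u.2) (a', u'.2)
        = ∑ a : A, ∑ b : B, ∑ a' : A, ∑ b' : B, ρ (a,b) (a',b') *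
            (∑ i : Fin q, ∑ i' : Fin q, E2c (i,b) (i',b') *
              (K (c,i) a * (starRingEnd ℂ) (K (c',i') a'))) := by
      calc ∑ u : Fin q × B, ∑ u' : Fin q × B, E2c u u' *
              ∑ a : A, ∑ a' : A,
                (K (c, u.1) a * (starRingEnd ℂ) (K (c', u'.1) a')) * ρ (a, u.2) (a', u'.2)
          = ∑ u : Fin q × B, ∑ u' : Fin q × B, ∑ a : A, ∑ a' : A, E2c u u' *
              ((K (c, u.1) a * (starRingEnd ℂ) (K (c', u'.1) a')) * ρ (a, u.2) (a', u'.2)) := by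
            refine Finset.sum_congr rfl fun u _ => Finset.sum_congr rfl fun u' _ => ?_
            rw [Finset.mul_sum]
            refine Finset.sum_congr rfl fun a _ => ?_
            rw [Finset.mul_sum]
        _ = ∑ a : A, ∑ a' : A, ∑ u' : Fin q × B, ∑ u : Fin q × B, E2c u u' *
              ((K (c, u.1) a * (starRingEnd ℂ) (K (c', u'.1) a')) * ρ (a, u.2) (a', u'.2)) :=
            sum_swap4 _
        _ = ∑ a : A, ∑ a' : A, ∑ u : Fin q × B, ∑ u' : Fin q × B, E2c u u' *
              ((K (c, u.1) a * (starRingEnd ℂ) (K (c', u'.1) a')) * ρ (a, u.2) (a', u'.2)) := by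
            refine Finset.sum_congr rfl fun a _ => Finset.sum_congr rfl fun a' _ => ?_
            exact Finset.sum_comm
        _ = ∑ a : A, ∑ a' : A, ∑ i : Fin q, ∑ b : B, ∑ i' : Fin q, ∑ b' : B,
              E2c (i,b) (i',b') *
              ((K (c, i) a * (starRingEnd ℂ) (K (c', i') a')) * ρ (a, b) (a', b')) := by
            refine Finset.sum_congr rfl fun a _ => Finset.sum_congr rfl fun a' _ => ?_
            rw [Fintype.sum_prod_type]
            refine Finset.sum_congr rfl fun i _ => Finset.sum_congr rfl fun b _ => ?_
            rw [Fintype.sum_prod_type]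
        _ = ∑ a : A, ∑ a' : A, ∑ b : B, ∑ b' : B, ∑ i : Fin q, ∑ i' : Fin q,
              E2c (i,b) (i',b') *
              ((K (c, i) a * (starRingEnd ℂ) (K (c', i') a')) * ρ (a, b) (a', b')) := by
            refine Finset.sum_congr rfl fun a _ => Finset.sum_congr rfl fun a' _ => ?_
            exact sum_swap4' _
        _ = ∑ a : A, ∑ b : B, ∑ a' : A, ∑ b' : B, ∑ i : Fin q, ∑ i' : Fin q,
              E2c (i,b) (i',b') *
              ((K (c, i) a * (starRingEnd ℂ) (K (c', i') a')) * ρ (a, b) (a', b')) := by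
            refine Finset.sum_congr rfl fun a _ => ?_
            exact Finset.sum_comm
        _ = ∑ a : A, ∑ b : B, ∑ a' : A, ∑ b' : B, ρ (a,b) (a',b') *
              (∑ i : Fin q, ∑ i' : Fin q, E2c (i,b) (i',b') *
                (K (c,i) a * (starRingEnd ℂ) (K (c',i') a'))) := by
            refine Finset.sum_congr rfl fun a _ => Finset.sum_congr rfl fun b _ =>
              Finset.sum_congr rfl fun a' _ => Finset.sum_congr rfl fun b' _ => ?_
            rw [Finset.mul_sum]
            refine Finset.sum_congr rfl fun i _ => ?_
            rw [Finset.mul_sum]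
            refine Finset.sum_congr rfl fun i' _ => ?_
            ring
    rw [swap1]
    refine Finset.sum_congr rfl fun a _ => Finset.sum_congr rfl fun b _ =>
      Finset.sum_congr rfl fun a' _ => Finset.sum_congr rfl fun b' _ => ?_
    congr 1
    -- the coefficient identity
    have hpartT : ∑ i : Fin q, ∑ i' : Fin q,
        (∑ s : (A × B) × (C × D), T (dd,s) (i,b) * (starRingEnd ℂ) (T (dd',s) (i',b'))) *
          (K (c,i) a * (starRingEnd ℂ) (K (c',i') a'))
        = J ((a,b),(c,dd)) ((a',b'),(c',dd')) := by
      rw [sum_factor (fun s i => T (dd,s) (i,b)) (fun s i' => T (dd',s) (i',b'))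
        (fun i => K (c,i) a) (fun i' => K (c',i') a')]
      simp only [hTXe]
      rw [← hRR, Matrix.mul_apply]
      refine Finset.sum_congr rfl fun s _ => ?_
      rw [herm_conj_apply hRh]
    have hpartN : ∑ i : Fin q, ∑ i' : Fin q,
        (∑ k : Fin q × B, N k (i,b) * (starRingEnd ℂ) (N k (i',b'))) *
          (K (c,i) a * (starRingEnd ℂ) (K (c',i') a'))
        = 0 := by
      rw [sum_factor (fun k i => N k (i,b)) (fun k i' => N k (i',b'))
        (fun i => K (c,i) a) (fun i' => K (c',i') a')]
      simp only [hNXe]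
      simp
    calc J ((a,b),(c,dd)) ((a',b'),(c',dd'))
        = (∑ i : Fin q, ∑ i' : Fin q,
            (∑ s : (A × B) × (C × D), T (dd,s) (i,b) * (starRingEnd ℂ) (T (dd',s) (i',b'))) *
              (K (c,i) a * (starRingEnd ℂ) (K (c',i') a')))
          + ((if dd = d₀ then (1:ℂ) else 0) * (if dd' = d₀ then (1:ℂ) else 0)) *
            (∑ i : Fin q, ∑ i' : Fin q,
              (∑ k : Fin q × B, N k (i,b) * (starRingEnd ℂ) (N k (i',b'))) *
                (K (c,i) a * (starRingEnd ℂ) (K (c',i') a'))) := by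
          rw [hpartT, hpartN, mul_zero, add_zero]
      _ = ∑ i : Fin q, ∑ i' : Fin q, E2c (i,b) (i',b') *
            (K (c,i) a * (starRingEnd ℂ) (K (c',i') a')) := by
          rw [hE2cdef]
          simp only
          rw [Finset.mul_sum]
          rw [← Finset.sum_add_distrib]
          refine Finset.sum_congr rfl fun i _ => ?_
          rw [Finset.mul_sum, ← Finset.sum_add_distrib]
          refine Finset.sum_congr rfl fun i' _ => ?_
          ring
  · -- Degenerate case: `D` is empty.
    have hDe : IsEmpty D := not_nonempty_iff.mp hD
    haveI := hDe
    have hCDe : IsEmpty (C × D) := by infer_instance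
    have hABe : IsEmpty (A × B) := by
      by_contra h
      have hne : Nonempty (A × B) := not_isEmpty_iff.mp h
      have h1 := hE.2.2 1
      have h2 : (E 1).trace = 0 := by
        rw [Matrix.trace]
        rw [Finset.univ_eq_empty]
        simp
      rw [h2, Matrix.trace_one] at h1
      have : (Fintype.card (A × B) : ℂ) ≠ 0 := by
        exact_mod_cast Nat.cast_ne_zero.mpr (Fintype.card_ne_zero)
      exact this h1.symm
    have hmateq : ∀ (q : ℕ) (E₁ : Matrix A A ℂ → Matrix (C × Fin q) (C × Fin q) ℂ)
        (E₂ : Matrix (Fin q × B) (Fin q × B) ℂ → Matrix D D ℂ) (ρ), E ρ =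
        rext E₂ ((Matrix.reindex (Equiv.prodAssoc C (Fin q) B) (Equiv.prodAssoc C (Fin q) B))
          (lext E₁ ρ)) := by
      intro q E₁ E₂ ρ
      apply Matrix.ext
      intro i j
      exact (hCDe.false i).elim
    rcases isEmpty_prod.mp hABe with hAe | hBe
    · -- A empty
      haveI := hAe
      refine ⟨0, fun _ => 0, fun _ => 0, ⟨?_, ?_, ?_⟩, ⟨?_, ?_, ?_⟩, hmateq 0 _ _⟩
      · intro c ρ σ; simp
      · have : choiOf (fun _ : Matrix A A ℂ => (0 : Matrix (C × Fin 0) (C × Fin 0) ℂ)) = 0 := by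
          ext p q; rfl
        rw [this]
        exact Matrix.PosSemidef.zero
      · intro ρ
        have : ρ.trace = 0 := by rw [Matrix.trace, Finset.univ_eq_empty]; simp
        simp [this]
      · intro c ρ σ; simp
      · have : choiOf (fun _ : Matrix (Fin 0 × B) (Fin 0 × B) ℂ => (0 : Matrix D D ℂ)) = 0 := by
          ext p q; rfl
        rw [this]
        exact Matrix.PosSemidef.zero
      · intro ρ
        have h1 : ρ.trace = 0 := by
          rw [Matrix.trace, Finset.univ_eq_empty]; simp
        simp [h1]
    · -- B empty
      haveI := hBe
      refine ⟨1, fun ρ => Matrix.of fun p p' => F ρ p.1 p'.1, fun _ => 0,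
        ⟨?_, ?_, ?_⟩, ⟨?_, ?_, ?_⟩, hmateq 1 _ _⟩
      · intro c ρ σ
        ext p p'
        simp only [hF.1 c ρ σ, Matrix.of_apply, Matrix.add_apply, Matrix.smul_apply]
      · -- Choi of the inflated F is PSD
        have hG := hF.2.1
        refine Matrix.PosSemidef.of_dotProduct_mulVec_nonneg ?_ ?_
        · ext ⟨a, c, i⟩ ⟨a', c', i'⟩
          simp only [choiOf, Matrix.conjTranspose_apply, Matrix.of_apply]
          exact herm_conj_apply hG.1 ((a',c')) ((a,c))
        · intro z
          have h2 := hG.dotProduct_mulVec_nonneg (fun s : A × C => z (s.1, (s.2, 0)))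
          have heq : star z ⬝ᵥ ((choiOf fun ρ => Matrix.of fun p p' =>
              F ρ p.1 p'.1 : Matrix (A × (C × Fin 1)) (A × (C × Fin 1)) ℂ) *ᵥ z)
              = star (fun s : A × C => z (s.1, (s.2, 0))) ⬝ᵥ
                ((choiOf F) *ᵥ (fun s : A × C => z (s.1, (s.2, 0)))) := by
            simp only [dotProduct, Matrix.mulVec, Pi.star_apply, choiOf,
              Matrix.of_apply, Fintype.sum_prod_type, Fin.sum_univ_one]
          rw [heq]
          exact h2
      · intro ρ
        rw [← hF.2.2 ρ]
        rw [Matrix.trace, Matrix.trace]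
        rw [Fintype.sum_prod_type]
        simp [Matrix.diag]
      · intro c ρ σ; simp
      · have : choiOf (fun _ : Matrix (Fin 1 × B) (Fin 1 × B) ℂ => (0 : Matrix D D ℂ)) = 0 := by
          ext p q; rfl
        rw [this]
        exact Matrix.PosSemidef.zero
      · intro ρ
        have h1 : ρ.trace = 0 := by
          rw [Matrix.trace, Finset.univ_eq_empty]; simp
        simp [h1]
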